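/- Let 𝒜 = {A₁, A₂, A₃, A₄} be a 4-cover of ℝ such that A₂ is countable. Then the following conditions are equivalent: (1) the hybrid space H₄(𝒜) is second-countable; (2) H₄(𝒜) is metrizable; (3) A₃ ∪ A₄ is countable. -/

import Mathlib

open TopologicalSpace


open Set

/-- The Sorgenfrey topology on ℝ (generated by the intervals `[a, b)`). -/
def sorgenfreyTop : TopologicalSpace ℝ :=
  TopologicalSpace.generateFrom {S : Set ℝ | ∃ a b : ℝ, S = Set.Ico a b}

/-- The "left" Sorgenfrey topology on ℝ (generated by the intervals `(a, b]`). -/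
def sorgenfreyLeftTop : TopologicalSpace ℝ :=
  TopologicalSpace.generateFrom {S : Set ℝ | ∃ a b : ℝ, S = Set.Ioc a b}

/-- `A₁, A₂, A₃, A₄` form a 4-cover of ℝ: pairwise disjoint with union ℝ. -/
def Is4Cover (A₁ A₂ A₃ A₄ : Set ℝ) : Prop :=
  A₁ ∪ A₂ ∪ A₃ ∪ A₄ = Set.univ ∧
  Disjoint A₁ A₂ ∧ Disjoint A₁ A₃ ∧ Disjoint A₁ A₄ ∧
  Disjoint A₂ A₃ ∧ Disjoint A₂ A₄ ∧ Disjoint A₃ A₄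

/-- The hybrid topology determined by a 4-cover: points of `A₁` have the usual
open intervals as a local base, points of `A₂` are isolated, points of `A₃`
have a local base of sets `[x, x+ε)`, and points of `A₄` of sets `(x-ε, x]`. -/
def hybridTop (A₁ A₂ A₃ A₄ : Set ℝ) : TopologicalSpace ℝ :=
  TopologicalSpace.generateFrom
    ({S : Set ℝ | ∃ x ∈ A₁, ∃ ε : ℝ, 0 < ε ∧ S = Set.Ioo (x - ε) (x + ε)} ∪
     {S : Set ℝ | ∃ x ∈ A₂, S = {x}} ∪
     {S : Set ℝ | ∃ x ∈ A₃, ∃ ε : ℝ, 0 < ε ∧ S = Set.Ico x (x + ε)} ∪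
     {S : Set ℝ | ∃ x ∈ A₄, ∃ ε : ℝ, 0 < ε ∧ S = Set.Ioc (x - ε) x})

/-- A quasi-metric: nonnegative, vanishing exactly on the diagonal,
satisfying the triangle inequality. -/
def IsQuasiMetric {X : Type*} (ρ : X → X → ℝ) : Prop :=
  (∀ x y, 0 ≤ ρ x y) ∧ (∀ x y, ρ x y = 0 ↔ x = y) ∧
  (∀ x y z, ρ x y ≤ ρ x z + ρ z y)

/-- A non-archimedean quasi-metric. -/
def IsNAQuasiMetric {X : Type*} (ρ : X → X → ℝ) : Prop :=
  IsQuasiMetric ρ ∧ ∀ x y z, ρ x y ≤ max (ρ x z) (ρ z y)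

/-- The topology induced by a quasi-metric: the balls `B_ρ(x, r)` form a base. -/
def quasiMetricTop {X : Type*} (ρ : X → X → ℝ) : TopologicalSpace X :=
  TopologicalSpace.generateFrom
    {B : Set X | ∃ x : X, ∃ r : ℝ, 0 < r ∧ B = {y : X | ρ x y < r}}

/-- A topology is quasi-metrizable if it is induced by some quasi-metric. -/
def QuasiMetrizableTop {X : Type*} (t : TopologicalSpace X) : Prop :=
  ∃ ρ : X → X → ℝ, IsQuasiMetric ρ ∧ t = quasiMetricTop ρ

/-- A topology is non-archimedeanly quasi-metrizable if it is induced by some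
non-archimedean quasi-metric. -/
def NAQuasiMetrizableTop {X : Type*} (t : TopologicalSpace X) : Prop :=
  ∃ ρ : X → X → ℝ, IsNAQuasiMetric ρ ∧ t = quasiMetricTop ρ

namespace HybridAux

variable (A₁ A₂ A₃ A₄ : Set ℝ)

def hgen : Set (Set ℝ) :=
  ({S : Set ℝ | ∃ x ∈ A₁, ∃ ε : ℝ, 0 < ε ∧ S = Set.Ioo (x - ε) (x + ε)} ∪
   {S : Set ℝ | ∃ x ∈ A₂, S = {x}} ∪
   {S : Set ℝ | ∃ x ∈ A₃, ∃ ε : ℝ, 0 < ε ∧ S = Set.Ico x (x + ε)} ∪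
   {S : Set ℝ | ∃ x ∈ A₄, ∃ ε : ℝ, 0 < ε ∧ S = Set.Ioc (x - ε) x})

theorem hybridTop_eq : hybridTop A₁ A₂ A₃ A₄ = generateFrom (hgen A₁ A₂ A₃ A₄) := rfl

open Classical in
noncomputable def hloc (x ε : ℝ) : Set ℝ :=
  if x ∈ A₂ then {x}
  else if x ∈ A₃ then Ico x (x + ε)
  else if x ∈ A₄ then Ioc (x - ε) x
  else Ioo (x - ε) (x + ε)

variable {A₁ A₂ A₃ A₄}

theorem hloc_subset_Ioo {x ε : ℝ} (hε : 0 < ε) :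
    hloc A₂ A₃ A₄ x ε ⊆ Ioo (x - ε) (x + ε) := by
  unfold hloc
  split_ifs
  · exact fun y hy => by
      rcases hy with rfl
      exact ⟨by linarith, by linarith⟩
  · exact fun y hy => ⟨by have := hy.1; linarith, hy.2⟩
  · intro y hy; exact ⟨hy.1, by have := hy.2; linarith⟩
  · exact fun y hy => hy

theorem mem_hloc {x ε : ℝ} (hε : 0 < ε) : x ∈ hloc A₂ A₃ A₄ x ε := by
  unfold hloc
  split_ifs
  · rfl
  · exact ⟨le_refl x, by linarith⟩
  · exact ⟨by linarith, le_refl x⟩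
  · exact ⟨by linarith, by linarith⟩

theorem hloc_mono {x ε ε' : ℝ} (h : ε ≤ ε') :
    hloc A₂ A₃ A₄ x ε ⊆ hloc A₂ A₃ A₄ x ε' := by
  unfold hloc
  split_ifs
  · exact subset_rfl
  · exact Ico_subset_Ico_right (by linarith)
  · exact Ioc_subset_Ioc_left (by linarith)
  · exact Ioo_subset_Ioo (by linarith) (by linarith)

theorem mem_A1 (hcov : Is4Cover A₁ A₂ A₃ A₄) {x : ℝ}
    (h2 : x ∉ A₂) (h3 : x ∉ A₃) (h4 : x ∉ A₄) : x ∈ A₁ := by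
  have := hcov.1
  have hx : x ∈ A₁ ∪ A₂ ∪ A₃ ∪ A₄ := this ▸ mem_univ x
  rcases hx with ((h | h) | h) | h <;> tauto

theorem hloc_mem_hgen (hcov : Is4Cover A₁ A₂ A₃ A₄) {x ε : ℝ} (hε : 0 < ε) :
    hloc A₂ A₃ A₄ x ε ∈ hgen A₁ A₂ A₃ A₄ := by
  unfold hloc
  split_ifs with h2 h3 h4
  · exact Or.inl (Or.inl (Or.inr ⟨x, h2, rfl⟩))
  · exact Or.inl (Or.inr ⟨x, h3, ε, hε, rfl⟩)
  · exact Or.inr ⟨x, h4, ε, hε, rfl⟩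
  · exact Or.inl (Or.inl (Or.inl ⟨x, mem_A1 hcov h2 h3 h4, ε, hε, rfl⟩))

theorem hloc_subset_of_Ioo {x a b : ℝ} {G : Set ℝ} (ha : a < x) (hb : x < b)
    (hG : Ioo a b ⊆ G) : ∃ ε > 0, hloc A₂ A₃ A₄ x ε ⊆ G := by
  have hm : 0 < min (x - a) (b - x) := lt_min (by linarith) (by linarith)
  refine ⟨min (x - a) (b - x), hm, ?_⟩
  refine (hloc_subset_Ioo hm).trans (subset_trans ?_ hG)
  apply Ioo_subset_Ioo
  · have : min (x - a) (b - x) ≤ x - a := min_le_left _ _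
    linarith
  · have : min (x - a) (b - x) ≤ b - x := min_le_right _ _
    linarith

theorem exists_hloc_subset (hcov : Is4Cover A₁ A₂ A₃ A₄) {G : Set ℝ} {x : ℝ}
    (hG : G ∈ hgen A₁ A₂ A₃ A₄) (hx : x ∈ G) :
    ∃ ε > 0, hloc A₂ A₃ A₄ x ε ⊆ G := by
  obtain ⟨_, _, _, _, d23, d24, d34⟩ := hcov
  rcases hG with ((⟨y, hy, ε, hε, rfl⟩ | ⟨y, hy, rfl⟩) | ⟨y, hy, ε, hε, rfl⟩) | ⟨y, hy, ε, hε, rfl⟩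
  · exact hloc_subset_of_Ioo hx.1 hx.2 subset_rfl
  · rcases hx with rfl
    refine ⟨1, one_pos, ?_⟩
    unfold hloc
    rw [if_pos hy]
  · rcases eq_or_lt_of_le hx.1 with rfl | hlt
    · refine ⟨ε, hε, ?_⟩
      unfold hloc
      rw [if_neg (fun h => d23.ne_of_mem h hy rfl), if_pos hy]
    · exact hloc_subset_of_Ioo hlt hx.2 (fun z hz => ⟨le_of_lt hz.1, hz.2⟩)
  · rcases eq_or_lt_of_le hx.2 with rfl | hlt
    · refine ⟨ε, hε, ?_⟩
      unfold hloc
      rw [if_neg (fun h => d24.ne_of_mem h hy rfl),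
        if_neg (fun h => d34.ne_of_mem h hy rfl), if_pos hy]
    · exact hloc_subset_of_Ioo hx.1 hlt (fun z hz => ⟨hz.1, le_of_lt hz.2⟩)

theorem hybrid_basis (hcov : Is4Cover A₁ A₂ A₃ A₄) :
    @IsTopologicalBasis ℝ (hybridTop A₁ A₂ A₃ A₄) (hgen A₁ A₂ A₃ A₄) := by
  refine @TopologicalSpace.IsTopologicalBasis.mk ℝ (hybridTop A₁ A₂ A₃ A₄) _ ?_ ?_ rfl
  · intro t₁ h₁ t₂ h₂ x hx
    obtain ⟨ε₁, hε₁, hs₁⟩ := exists_hloc_subset hcov h₁ hx.1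
    obtain ⟨ε₂, hε₂, hs₂⟩ := exists_hloc_subset hcov h₂ hx.2
    refine ⟨hloc A₂ A₃ A₄ x (min ε₁ ε₂), hloc_mem_hgen hcov (lt_min hε₁ hε₂),
      mem_hloc (lt_min hε₁ hε₂), subset_inter
        ((hloc_mono (min_le_left _ _)).trans hs₁)
        ((hloc_mono (min_le_right _ _)).trans hs₂)⟩
  · apply eq_univ_of_forall
    intro x
    exact ⟨hloc A₂ A₃ A₄ x 1, hloc_mem_hgen hcov one_pos, mem_hloc one_pos⟩

theorem mem_nhds_iff' (hcov : Is4Cover A₁ A₂ A₃ A₄) {x : ℝ} {s : Set ℝ} :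
    s ∈ @nhds ℝ (hybridTop A₁ A₂ A₃ A₄) x ↔ ∃ ε > 0, hloc A₂ A₃ A₄ x ε ⊆ s := by
  rw [@TopologicalSpace.IsTopologicalBasis.mem_nhds_iff ℝ (hybridTop A₁ A₂ A₃ A₄) x s _ (hybrid_basis hcov)]
  constructor
  · rintro ⟨t, ht, hxt, hts⟩
    obtain ⟨ε, hε, h⟩ := exists_hloc_subset hcov ht hxt
    exact ⟨ε, hε, h.trans hts⟩
  · rintro ⟨ε, hε, h⟩
    exact ⟨hloc A₂ A₃ A₄ x ε, hloc_mem_hgen hcov hε, mem_hloc hε, h⟩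

theorem isOpen_hybrid_of_isOpen (hcov : Is4Cover A₁ A₂ A₃ A₄) {U : Set ℝ} (hU : IsOpen U) :
    @IsOpen ℝ (hybridTop A₁ A₂ A₃ A₄) U := by
  rw [@isOpen_iff_mem_nhds ℝ (hybridTop A₁ A₂ A₃ A₄) U]
  intro x hx
  rw [mem_nhds_iff' hcov]
  obtain ⟨ε, hε, hb⟩ := Metric.isOpen_iff.1 hU x hx
  refine ⟨ε, hε, (hloc_subset_Ioo hε).trans ?_⟩
  rw [← Real.ball_eq_Ioo]; exact hb

theorem isClosed_hybrid_of_isClosed (hcov : Is4Cover A₁ A₂ A₃ A₄) {C : Set ℝ} (hC : IsClosed C) :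
    @IsClosed ℝ (hybridTop A₁ A₂ A₃ A₄) C :=
  @IsClosed.mk ℝ (hybridTop A₁ A₂ A₃ A₄) C (isOpen_hybrid_of_isOpen hcov hC.isOpen_compl)

variable (A₂ A₃ A₄) in
open Classical in
noncomputable def cloc (x ε : ℝ) : Set ℝ :=
  if x ∈ A₂ then {x}
  else if x ∈ A₃ then Icc x (x + ε)
  else if x ∈ A₄ then Icc (x - ε) x
  else Icc (x - ε) (x + ε)

theorem hloc_subset_cloc (x ε : ℝ) : hloc A₂ A₃ A₄ x ε ⊆ cloc A₂ A₃ A₄ x ε := by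
  unfold hloc cloc
  split_ifs
  · exact subset_rfl
  · exact Ico_subset_Icc_self
  · exact Ioc_subset_Icc_self
  · exact Ioo_subset_Icc_self

theorem cloc_subset_hloc {x ε : ℝ} (hε : 0 < ε) :
    cloc A₂ A₃ A₄ x (ε / 2) ⊆ hloc A₂ A₃ A₄ x ε := by
  unfold hloc cloc
  split_ifs
  · exact subset_rfl
  · exact Icc_subset_Ico_right (by linarith)
  · exact (Icc_subset_Ioc_iff (by linarith)).2 ⟨by linarith, le_refl x⟩
  · exact Icc_subset_Ioo (by linarith) (by linarith)

theorem cloc_isClosed (x ε : ℝ) : IsClosed (cloc A₂ A₃ A₄ x ε) := by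
  unfold cloc
  split_ifs
  · exact isClosed_singleton
  · exact isClosed_Icc
  · exact isClosed_Icc
  · exact isClosed_Icc

theorem hybrid_regular (hcov : Is4Cover A₁ A₂ A₃ A₄) :
    @RegularSpace ℝ (hybridTop A₁ A₂ A₃ A₄) := by
  refine @RegularSpace.of_exists_mem_nhds_isClosed_subset ℝ (hybridTop A₁ A₂ A₃ A₄) ?_
  intro x s hs
  obtain ⟨ε, hε, hsub⟩ := (mem_nhds_iff' hcov).1 hs
  refine ⟨cloc A₂ A₃ A₄ x (ε / 2), ?_, isClosed_hybrid_of_isClosed hcov (cloc_isClosed x (ε / 2)),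
    (cloc_subset_hloc hε).trans hsub⟩
  rw [mem_nhds_iff' hcov]
  exact ⟨ε / 2, by linarith, hloc_subset_cloc x (ε / 2)⟩

theorem hybrid_t1 (hcov : Is4Cover A₁ A₂ A₃ A₄) : @T1Space ℝ (hybridTop A₁ A₂ A₃ A₄) :=
  @T1Space.mk ℝ (hybridTop A₁ A₂ A₃ A₄)
    (fun x => isClosed_hybrid_of_isClosed hcov isClosed_singleton)

theorem metrizable_of_sc (hcov : Is4Cover A₁ A₂ A₃ A₄)
    (hsc : @SecondCountableTopology ℝ (hybridTop A₁ A₂ A₃ A₄)) :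
    ∃ m : MetricSpace ℝ, m.toUniformSpace.toTopologicalSpace = hybridTop A₁ A₂ A₃ A₄ := by
  have ht0 : @T0Space ℝ (hybridTop A₁ A₂ A₃ A₄) :=
    @T1Space.t0Space ℝ (hybridTop A₁ A₂ A₃ A₄) (hybrid_t1 hcov)
  have ht3 : @T3Space ℝ (hybridTop A₁ A₂ A₃ A₄) :=
    @T3Space.mk ℝ (hybridTop A₁ A₂ A₃ A₄) ht0 (hybrid_regular hcov)
  have hmet := @TopologicalSpace.metrizableSpace_of_t3_secondCountable ℝ
    (hybridTop A₁ A₂ A₃ A₄) ht3 hsc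
  exact ⟨@TopologicalSpace.metrizableSpaceMetric ℝ (hybridTop A₁ A₂ A₃ A₄) hmet, rfl⟩

theorem hloc_eq₂ {x : ℝ} (h : x ∈ A₂) (ε : ℝ) : hloc A₂ A₃ A₄ x ε = {x} := by
  unfold hloc; rw [if_pos h]

theorem hloc_eq₃ (hcov : Is4Cover A₁ A₂ A₃ A₄) {x : ℝ} (h : x ∈ A₃) (ε : ℝ) :
    hloc A₂ A₃ A₄ x ε = Ico x (x + ε) := by
  unfold hloc
  rw [if_neg (fun h2 => hcov.2.2.2.2.1.ne_of_mem h2 h rfl), if_pos h]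

theorem hloc_eq₄ (hcov : Is4Cover A₁ A₂ A₃ A₄) {x : ℝ} (h : x ∈ A₄) (ε : ℝ) :
    hloc A₂ A₃ A₄ x ε = Ioc (x - ε) x := by
  unfold hloc
  rw [if_neg (fun h2 => hcov.2.2.2.2.2.1.ne_of_mem h2 h rfl),
    if_neg (fun h3 => hcov.2.2.2.2.2.2.ne_of_mem h3 h rfl), if_pos h]

theorem hloc_eq₁ {x : ℝ} (h2 : x ∉ A₂) (h3 : x ∉ A₃) (h4 : x ∉ A₄) (ε : ℝ) :
    hloc A₂ A₃ A₄ x ε = Ioo (x - ε) (x + ε) := by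
  unfold hloc; rw [if_neg h2, if_neg h3, if_neg h4]

variable (A₂ A₃ A₄) in
noncomputable def cBase : Set (Set ℝ) :=
  ((fun p : ℚ × ℚ => Ioo (p.1 : ℝ) (p.2 : ℝ)) '' Set.univ) ∪
  ((fun p : ℝ × ℚ => hloc A₂ A₃ A₄ p.1 (p.2 : ℝ)) ''
    ((A₂ ∪ (A₃ ∪ A₄)) ×ˢ {q : ℚ | 0 < q}))

theorem sc_of_countable (hcov : Is4Cover A₁ A₂ A₃ A₄) (h2 : A₂.Countable)
    (h34 : (A₃ ∪ A₄).Countable) :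
    @SecondCountableTopology ℝ (hybridTop A₁ A₂ A₃ A₄) := by
  have hBc : (cBase A₂ A₃ A₄).Countable :=
    (Set.countable_univ.image _).union (((h2.union h34).prod (Set.to_countable _)).image _)
  refine @TopologicalSpace.IsTopologicalBasis.secondCountableTopology ℝ
    (hybridTop A₁ A₂ A₃ A₄) (cBase A₂ A₃ A₄)
    (@isTopologicalBasis_of_isOpen_of_nhds ℝ (hybridTop A₁ A₂ A₃ A₄) (cBase A₂ A₃ A₄) ?_ ?_) hBc
  · rintro u (⟨⟨q, r⟩, -, rfl⟩ | ⟨⟨x, q⟩, ⟨hx, hq⟩, rfl⟩)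
    · exact isOpen_hybrid_of_isOpen hcov isOpen_Ioo
    · rw [hybridTop_eq]
      exact TopologicalSpace.isOpen_generateFrom_of_mem
        (hloc_mem_hgen hcov (by exact_mod_cast hq))
  · intro a u hau hu
    have hnb : u ∈ @nhds ℝ (hybridTop A₁ A₂ A₃ A₄) a :=
      @IsOpen.mem_nhds ℝ (hybridTop A₁ A₂ A₃ A₄) a u hu hau
    obtain ⟨ε, hε, hsub⟩ := (mem_nhds_iff' hcov).1 hnb
    by_cases h234 : a ∈ A₂ ∪ (A₃ ∪ A₄)
    · obtain ⟨q, hq0, hqε⟩ := exists_rat_btwn hε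
      have hq0' : (0 : ℝ) < q := hq0
      refine ⟨hloc A₂ A₃ A₄ a q, Or.inr ⟨(a, q), ⟨h234, by exact_mod_cast hq0'⟩, rfl⟩,
        mem_hloc hq0', (hloc_mono hqε.le).trans hsub⟩
    · simp only [mem_union, not_or] at h234
      have ha1 : hloc A₂ A₃ A₄ a ε = Ioo (a - ε) (a + ε) :=
        hloc_eq₁ h234.1 h234.2.1 h234.2.2 ε
      obtain ⟨q, hq1, hq2⟩ := exists_rat_btwn (show a - ε < a by linarith)
      obtain ⟨r, hr1, hr2⟩ := exists_rat_btwn (show a < a + ε by linarith)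
      refine ⟨Ioo (q : ℝ) r, Or.inl ⟨(q, r), mem_univ _, rfl⟩, ⟨hq2, hr1⟩, ?_⟩
      refine subset_trans (fun z hz => ?_) (ha1 ▸ hsub)
      exact ⟨by linarith [hz.1], by linarith [hz.2]⟩

theorem countable_of_sc (hcov : Is4Cover A₁ A₂ A₃ A₄)
    (hsc : @SecondCountableTopology ℝ (hybridTop A₁ A₂ A₃ A₄)) :
    (A₃ ∪ A₄).Countable := by
  obtain ⟨B, hBc, -, hB⟩ :=
    @TopologicalSpace.exists_countable_basis ℝ (hybridTop A₁ A₂ A₃ A₄) hsc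
  have h3 : A₃.Countable := by
    have H : ∀ x ∈ A₃, ∃ b ∈ B, x ∈ b ∧ b ⊆ Ico x (x + 1) := by
      intro x hx
      have hn : Ico x (x + 1) ∈ @nhds ℝ (hybridTop A₁ A₂ A₃ A₄) x := by
        rw [mem_nhds_iff' hcov]
        exact ⟨1, one_pos, by rw [hloc_eq₃ hcov hx]⟩
      exact (@TopologicalSpace.IsTopologicalBasis.mem_nhds_iff ℝ (hybridTop A₁ A₂ A₃ A₄) x
        (Ico x (x + 1)) B hB).1 hn
    choose! f hfB hxf hfs using H
    refine Set.MapsTo.countable_of_injOn (fun x hx => hfB x hx) ?_ hBc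
    intro x hx y hy hxy
    have h1 : y ∈ f x := hxy ▸ hxf y hy
    have h2 : x ∈ f y := hxy.symm ▸ hxf x hx
    exact le_antisymm ((hfs x hx) h1).1 ((hfs y hy) h2).1
  have h4 : A₄.Countable := by
    have H : ∀ x ∈ A₄, ∃ b ∈ B, x ∈ b ∧ b ⊆ Ioc (x - 1) x := by
      intro x hx
      have hn : Ioc (x - 1) x ∈ @nhds ℝ (hybridTop A₁ A₂ A₃ A₄) x := by
        rw [mem_nhds_iff' hcov]
        exact ⟨1, one_pos, by rw [hloc_eq₄ hcov hx]⟩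
      exact (@TopologicalSpace.IsTopologicalBasis.mem_nhds_iff ℝ (hybridTop A₁ A₂ A₃ A₄) x
        (Ioc (x - 1) x) B hB).1 hn
    choose! f hfB hxf hfs using H
    refine Set.MapsTo.countable_of_injOn (fun x hx => hfB x hx) ?_ hBc
    intro x hx y hy hxy
    have h1 : y ∈ f x := hxy ▸ hxf y hy
    have h2 : x ∈ f y := hxy.symm ▸ hxf x hx
    exact le_antisymm ((hfs y hy) h2).2 ((hfs x hx) h1).2
  exact h3.union h4

theorem hybrid_dense (hcov : Is4Cover A₁ A₂ A₃ A₄) :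
    @Dense ℝ (hybridTop A₁ A₂ A₃ A₄) (Set.range ((↑) : ℚ → ℝ) ∪ A₂) := by
  rw [@dense_iff_inter_open ℝ (hybridTop A₁ A₂ A₃ A₄)]
  intro U hU ⟨x, hx⟩
  obtain ⟨ε, hε, hsub⟩ := (mem_nhds_iff' hcov).1
    (@IsOpen.mem_nhds ℝ (hybridTop A₁ A₂ A₃ A₄) x U hU hx)
  by_cases h2 : x ∈ A₂
  · exact ⟨x, hx, Or.inr h2⟩
  by_cases h3 : x ∈ A₃
  · obtain ⟨q, hq1, hq2⟩ := exists_rat_btwn (show x < x + ε by linarith)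
    refine ⟨q, hsub ?_, Or.inl ⟨q, rfl⟩⟩
    rw [hloc_eq₃ hcov h3]
    exact ⟨le_of_lt hq1, hq2⟩
  by_cases h4 : x ∈ A₄
  · obtain ⟨q, hq1, hq2⟩ := exists_rat_btwn (show x - ε < x by linarith)
    refine ⟨q, hsub ?_, Or.inl ⟨q, rfl⟩⟩
    rw [hloc_eq₄ hcov h4]
    exact ⟨hq1, le_of_lt hq2⟩
  · obtain ⟨q, hq1, hq2⟩ := exists_rat_btwn (show x < x + ε by linarith)
    refine ⟨q, hsub ?_, Or.inl ⟨q, rfl⟩⟩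
    rw [hloc_eq₁ h2 h3 h4]
    exact ⟨by linarith, hq2⟩

theorem sc_of_metrizable (hcov : Is4Cover A₁ A₂ A₃ A₄) (h2 : A₂.Countable)
    (hm : ∃ m : MetricSpace ℝ, m.toUniformSpace.toTopologicalSpace = hybridTop A₁ A₂ A₃ A₄) :
    @SecondCountableTopology ℝ (hybridTop A₁ A₂ A₃ A₄) := by
  obtain ⟨m, hm⟩ := hm
  rw [← hm]
  have hsep : @TopologicalSpace.SeparableSpace ℝ m.toUniformSpace.toTopologicalSpace :=
    @TopologicalSpace.SeparableSpace.mk ℝ m.toUniformSpace.toTopologicalSpace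
      ⟨Set.range ((↑) : ℚ → ℝ) ∪ A₂, (Set.countable_range _).union h2,
        hm ▸ hybrid_dense hcov⟩
  have hcg : Filter.IsCountablyGenerated (@uniformity ℝ m.toUniformSpace) := by
    letI := m; infer_instance
  exact @UniformSpace.secondCountable_of_separable ℝ m.toUniformSpace hcg hsep

end HybridAux

/-- **Proposition 2.14.** If `A₂` is countable, then the following are equivalent:
(1) `H₄(𝒜)` is second-countable; (2) `H₄(𝒜)` is metrizable; (3) `A₃ ∪ A₄` is countable. -/
theorem hybrid_secondCountable_metrizable_tfae
    (A₁ A₂ A₃ A₄ : Set ℝ) (hcov : Is4Cover A₁ A₂ A₃ A₄) (h2 : A₂.Countable) :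
    List.TFAE
      [@SecondCountableTopology ℝ (hybridTop A₁ A₂ A₃ A₄),
       ∃ m : MetricSpace ℝ, m.toUniformSpace.toTopologicalSpace = hybridTop A₁ A₂ A₃ A₄,
       (A₃ ∪ A₄).Countable] := by
  tfae_have 1 → 2 := HybridAux.metrizable_of_sc hcov
  tfae_have 2 → 1 := HybridAux.sc_of_metrizable hcov h2
  tfae_have 1 → 3 := HybridAux.countable_of_sc hcov
  tfae_have 3 → 1 := HybridAux.sc_of_countable hcov h2
  tfae_finish
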